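/- Let λ, m, r, u, v, k be positive real numbers with kλr < muv (i.e., R₀ < 1), and let τ ≥ 0. Then every complex root y of the equation (u + y)(v + y) = (kλr/m)e^{−τy} has strictly negative real part. -/

import Mathlib

open Complex

/-- If `R₀ < 1` and `τ ≥ 0`, every complex root of
`(u+y)(v+y) = (kλr/m)e^{−τy}` has strictly negative real part. -/
theorem roots_neg_re_E0
    (lam m r u v k τ : ℝ)
    (hlam : 0 < lam) (hm : 0 < m) (hr : 0 < r) (hu : 0 < u)
    (hv : 0 < v) (hk : 0 < k)
    (hR0 : k * lam * r < m * u * v) (hτ : 0 ≤ τ) :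
    ∀ y : ℂ,
      ((u : ℂ) + y) * ((v : ℂ) + y)
        = ((k * lam * r / m : ℝ) : ℂ) * Complex.exp (-(τ : ℂ) * y) →
      y.re < 0 := by
  intro y hy
  by_contra h
  push_neg at h
  have habs := congrArg (‖·‖) hy
  rw [norm_mul, norm_mul, Complex.norm_exp, Complex.norm_real, Real.norm_eq_abs] at habs
  -- |exp(-τ y)| ≤ 1
  have hexp : Real.exp ((-(τ : ℂ) * y).re) ≤ 1 := by
    rw [Real.exp_le_one_iff]
    simp [Complex.mul_re]
    positivity
  have hc : 0 < k * lam * r / m := by positivity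
  have hiu : (u : ℝ) ≤ ‖(u : ℂ) + y‖ := by
    calc (u : ℝ) ≤ ((u : ℂ) + y).re := by simp [h]
    _ ≤ ‖(u : ℂ) + y‖ := Complex.re_le_norm _
  have hiv : (v : ℝ) ≤ ‖(v : ℂ) + y‖ := by
    calc (v : ℝ) ≤ ((v : ℂ) + y).re := by simp [h]
    _ ≤ ‖(v : ℂ) + y‖ := Complex.re_le_norm _
  have h1 : u * v ≤ ‖(u : ℂ) + y‖ * ‖(v : ℂ) + y‖ :=
    mul_le_mul hiu hiv hv.le (norm_nonneg _)
  have h2 : |k * lam * r / m| * Real.exp ((-(τ : ℂ) * y).re) ≤ k * lam * r / m := by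
    rw [abs_of_pos hc]
    nlinarith [Real.exp_pos ((-(τ : ℂ) * y).re)]
  have h3 : k * lam * r / m < u * v := by
    rw [div_lt_iff₀ hm]
    nlinarith
  linarith
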